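/- arXiv:1010.2791 — 4 statements merged into one kernel-verified Lean document; each statement's English description precedes it below -/
import Mathlib

section
/- Let d ≥ 1, A(x,ξ) := (1/4)(|x|² + 2 x·ξ + 3|ξ|²) and μ(x,ξ) := e^{−A(x,ξ)}. Then μ is a stationary solution of the Wigner–Fokker–Planck equation with harmonic potential: for all (x,ξ) ∈ ℝ^{2d}, (L μ)(x,ξ) := −ξ·∇_x μ + x·∇_ξ μ + Δ_ξ μ + 2 div_ξ(ξ μ) + Δ_x μ = 0. -/
open MeasureTheory Real

noncomputable def WFP.A {d : ℕ} (x ξ : EuclideanSpace ℝ (Fin d)) : ℝ :=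
  (1 / 4) * (‖x‖ ^ 2 + 2 * (inner ℝ x ξ : ℝ) + 3 * ‖ξ‖ ^ 2)

/-- The unperturbed Wigner–Fokker–Planck operator
`L w = −ξ·∇_x w + x·∇_ξ w + Δ_ξ w + 2 div_ξ(ξ w) + Δ_x w`. -/
noncomputable def WFP.L {d : ℕ}
    (w : EuclideanSpace ℝ (Fin d) × EuclideanSpace ℝ (Fin d) → ℂ)
    (p : EuclideanSpace ℝ (Fin d) × EuclideanSpace ℝ (Fin d)) : ℂ :=
  -- −ξ·∇_x w
  - fderiv ℝ w p (p.2, 0)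
  -- + x·∇_ξ w
  + fderiv ℝ w p (0, p.1)
  -- + Δ_ξ w
  + ∑ i : Fin d, fderiv ℝ (fun q => fderiv ℝ w q (0, EuclideanSpace.single i 1)) p
      (0, EuclideanSpace.single i 1)
  -- + 2 div_ξ (ξ w)
  + 2 * ∑ i : Fin d, fderiv ℝ (fun q => (q.2 i : ℂ) * w q) p (0, EuclideanSpace.single i 1)
  -- + Δ_x w
  + ∑ i : Fin d, fderiv ℝ (fun q => fderiv ℝ w q (EuclideanSpace.single i 1, 0)) p
      (EuclideanSpace.single i 1, 0)

namespace WFPaux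

variable {d : ℕ}

local notation "E" => EuclideanSpace ℝ (Fin d)

/-- coordinate functional on the first factor -/
noncomputable def X (i : Fin d) : (E × E) →L[ℝ] ℝ :=
  (EuclideanSpace.proj i).comp (ContinuousLinearMap.fst ℝ _ _)

/-- coordinate functional on the second factor -/
noncomputable def Y (i : Fin d) : (E × E) →L[ℝ] ℝ :=
  (EuclideanSpace.proj i).comp (ContinuousLinearMap.snd ℝ _ _)

@[simp] lemma X_apply (i : Fin d) (v : E × E) : X i v = v.1 i := rfl
@[simp] lemma Y_apply (i : Fin d) (v : E × E) : Y i v = v.2 i := rfl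

lemma hasFDerivAt_x (i : Fin d) (p : E × E) :
    HasFDerivAt (fun q : E × E => q.1 i) (X i) p := (X i).hasFDerivAt
lemma hasFDerivAt_y (i : Fin d) (p : E × E) :
    HasFDerivAt (fun q : E × E => q.2 i) (Y i) p := (Y i).hasFDerivAt

/-- derivative of `φ q = -(A q.1 q.2)` -/
noncomputable def Dφ (p : E × E) : (E × E) →L[ℝ] ℝ :=
  -((1/2 : ℝ) • ((innerSL ℝ (p.1 + p.2)).comp (ContinuousLinearMap.fst ℝ _ _)
    + (innerSL ℝ (p.1 + (3:ℝ) • p.2)).comp (ContinuousLinearMap.snd ℝ _ _)))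

lemma Dφ_apply (p v : E × E) :
    Dφ p v = -(1/2) * ((inner ℝ (p.1 + p.2) v.1 : ℝ)
      + (inner ℝ (p.1 + (3:ℝ) • p.2) v.2 : ℝ)) := by
  simp only [Dφ, ContinuousLinearMap.neg_apply, ContinuousLinearMap.smul_apply,
    ContinuousLinearMap.add_apply, ContinuousLinearMap.comp_apply,
    ContinuousLinearMap.coe_fst', ContinuousLinearMap.coe_snd', innerSL_apply_apply, smul_eq_mul]
  ring

lemma hasFDerivAt_φ (p : E × E) :
    HasFDerivAt (fun q : E × E => -(WFP.A q.1 q.2)) (Dφ p) p := by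
  have h1 : HasFDerivAt (fun q : E × E => (inner ℝ q.1 q.1 : ℝ))
      ((fderivInnerCLM ℝ (p.1, p.1)).comp
        ((ContinuousLinearMap.fst ℝ E E).prod (ContinuousLinearMap.fst ℝ E E))) p :=
    hasFDerivAt_fst.inner ℝ hasFDerivAt_fst
  have h2 : HasFDerivAt (fun q : E × E => (inner ℝ q.1 q.2 : ℝ))
      ((fderivInnerCLM ℝ (p.1, p.2)).comp
        ((ContinuousLinearMap.fst ℝ E E).prod (ContinuousLinearMap.snd ℝ E E))) p :=
    hasFDerivAt_fst.inner ℝ hasFDerivAt_snd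
  have h3 : HasFDerivAt (fun q : E × E => (inner ℝ q.2 q.2 : ℝ))
      ((fderivInnerCLM ℝ (p.2, p.2)).comp
        ((ContinuousLinearMap.snd ℝ E E).prod (ContinuousLinearMap.snd ℝ E E))) p :=
    hasFDerivAt_snd.inner ℝ hasFDerivAt_snd
  have h := (((h1.add (h2.const_mul 2)).add (h3.const_mul 3)).const_mul (1/4 : ℝ)).neg
  have hfun : (fun q : E × E => -(WFP.A q.1 q.2))
      = fun q : E × E => -((1/4 : ℝ) * ((inner ℝ q.1 q.1 : ℝ)
          + 2 * (inner ℝ q.1 q.2 : ℝ) + 3 * (inner ℝ q.2 q.2 : ℝ))) := by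
    funext q
    rw [WFP.A, real_inner_self_eq_norm_sq, real_inner_self_eq_norm_sq]
  rw [hfun]
  refine h.congr_fderiv ?_
  refine ContinuousLinearMap.ext fun v => ?_
  simp only [Dφ, ContinuousLinearMap.neg_apply, ContinuousLinearMap.smul_apply,
    ContinuousLinearMap.add_apply, ContinuousLinearMap.comp_apply,
    ContinuousLinearMap.coe_fst', ContinuousLinearMap.coe_snd',
    ContinuousLinearMap.prod_apply, innerSL_apply_apply, fderivInnerCLM_apply,
    inner_add_left, inner_smul_left, smul_eq_mul, RCLike.conj_to_real]
  rw [real_inner_comm v.1 p.1, real_inner_comm v.1 p.2, real_inner_comm v.2 p.2]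
  ring

lemma hasFDerivAt_mu (p : E × E) :
    HasFDerivAt (fun q : E × E => (Real.exp (-(WFP.A q.1 q.2)) : ℂ))
      (Complex.ofRealCLM.comp (Real.exp (-(WFP.A p.1 p.2)) • Dφ p)) p :=
  Complex.ofRealCLM.hasFDerivAt.comp p (hasFDerivAt_φ p).exp

lemma fderiv_mu_apply (p v : E × E) :
    fderiv ℝ (fun q : E × E => (Real.exp (-(WFP.A q.1 q.2)) : ℂ)) p v
      = ((Real.exp (-(WFP.A p.1 p.2)) * Dφ p v : ℝ) : ℂ) := by
  rw [(hasFDerivAt_mu p).fderiv]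
  simp

lemma Dφ_dir_y (p : E × E) (i : Fin d) :
    Dφ p (0, EuclideanSpace.single i 1) = -(1/2) * (p.1 i + 3 * p.2 i) := by
  rw [Dφ_apply]
  simp [EuclideanSpace.inner_single_right]
  try ring

lemma Dφ_dir_x (p : E × E) (i : Fin d) :
    Dφ p (EuclideanSpace.single i 1, 0) = -(1/2) * (p.1 i + p.2 i) := by
  rw [Dφ_apply]
  simp [EuclideanSpace.inner_single_right]

lemma second_y (p : E × E) (i : Fin d) :
    fderiv ℝ (fun q : E × E =>
        fderiv ℝ (fun q : E × E => (Real.exp (-(WFP.A q.1 q.2)) : ℂ)) q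
          (0, EuclideanSpace.single i 1)) p (0, EuclideanSpace.single i 1)
      = ((Real.exp (-(WFP.A p.1 p.2)) * (-(1/2) * (p.1 i + 3 * p.2 i))^2
          + Real.exp (-(WFP.A p.1 p.2)) * (-(3/2)) : ℝ) : ℂ) := by
  have hfun : (fun q : E × E =>
      fderiv ℝ (fun q : E × E => (Real.exp (-(WFP.A q.1 q.2)) : ℂ)) q
        (0, EuclideanSpace.single i 1))
      = fun q : E × E => ((Real.exp (-(WFP.A q.1 q.2))
          * (-(1/2) * (q.1 i + 3 * q.2 i)) : ℝ) : ℂ) := by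
    funext q
    rw [fderiv_mu_apply, Dφ_dir_y]
  rw [hfun]
  have hc : HasFDerivAt (fun q : E × E => -(1/2 : ℝ) * (q.1 i + 3 * q.2 i))
      ((-(1/2 : ℝ)) • (X i + (3:ℝ) • Y i)) p := by
    have := ((hasFDerivAt_x i p).add ((hasFDerivAt_y i p).const_mul 3)).const_mul (-(1/2 : ℝ))
    simpa using this
  have hprod := (hasFDerivAt_φ p).exp.mul hc
  have h2 : HasFDerivAt (fun q : E × E => ((Real.exp (-(WFP.A q.1 q.2))
      * (-(1/2) * (q.1 i + 3 * q.2 i)) : ℝ) : ℂ)) (Complex.ofRealCLM.comp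
        (Real.exp (-(WFP.A p.1 p.2)) • ((-(1/2 : ℝ)) • (X i + (3:ℝ) • Y i))
          + (-(1/2 : ℝ) * (p.1 i + 3 * p.2 i)) • (Real.exp (-(WFP.A p.1 p.2)) • Dφ p))) p :=
    Complex.ofRealCLM.hasFDerivAt.comp p hprod
  rw [h2.fderiv]
  simp only [ContinuousLinearMap.comp_apply, ContinuousLinearMap.add_apply,
    ContinuousLinearMap.smul_apply, X_apply, Y_apply, Dφ_dir_y, smul_eq_mul,
    Complex.ofRealCLM_apply]
  simp [EuclideanSpace.single_apply]
  push_cast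
  ring

lemma second_x (p : E × E) (i : Fin d) :
    fderiv ℝ (fun q : E × E =>
        fderiv ℝ (fun q : E × E => (Real.exp (-(WFP.A q.1 q.2)) : ℂ)) q
          (EuclideanSpace.single i 1, 0)) p (EuclideanSpace.single i 1, 0)
      = ((Real.exp (-(WFP.A p.1 p.2)) * (-(1/2) * (p.1 i + p.2 i))^2
          + Real.exp (-(WFP.A p.1 p.2)) * (-(1/2)) : ℝ) : ℂ) := by
  have hfun : (fun q : E × E =>
      fderiv ℝ (fun q : E × E => (Real.exp (-(WFP.A q.1 q.2)) : ℂ)) q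
        (EuclideanSpace.single i 1, 0))
      = fun q : E × E => ((Real.exp (-(WFP.A q.1 q.2))
          * (-(1/2) * (q.1 i + q.2 i)) : ℝ) : ℂ) := by
    funext q
    rw [fderiv_mu_apply, Dφ_dir_x]
  rw [hfun]
  have hc : HasFDerivAt (fun q : E × E => -(1/2 : ℝ) * (q.1 i + q.2 i))
      ((-(1/2 : ℝ)) • (X i + Y i)) p := by
    have := ((hasFDerivAt_x i p).add (hasFDerivAt_y i p)).const_mul (-(1/2 : ℝ))
    simpa using this
  have hprod := (hasFDerivAt_φ p).exp.mul hc
  have h2 : HasFDerivAt (fun q : E × E => ((Real.exp (-(WFP.A q.1 q.2))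
      * (-(1/2) * (q.1 i + q.2 i)) : ℝ) : ℂ)) (Complex.ofRealCLM.comp
        (Real.exp (-(WFP.A p.1 p.2)) • ((-(1/2 : ℝ)) • (X i + Y i))
          + (-(1/2 : ℝ) * (p.1 i + p.2 i)) • (Real.exp (-(WFP.A p.1 p.2)) • Dφ p))) p :=
    Complex.ofRealCLM.hasFDerivAt.comp p hprod
  rw [h2.fderiv]
  simp only [ContinuousLinearMap.comp_apply, ContinuousLinearMap.add_apply,
    ContinuousLinearMap.smul_apply, X_apply, Y_apply, Dφ_dir_x, smul_eq_mul,
    Complex.ofRealCLM_apply]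
  simp [EuclideanSpace.single_apply]
  push_cast
  ring

lemma div_term (p : E × E) (i : Fin d) :
    fderiv ℝ (fun q : E × E => (q.2 i : ℂ)
        * (Real.exp (-(WFP.A q.1 q.2)) : ℂ)) p (0, EuclideanSpace.single i 1)
      = ((p.2 i * Real.exp (-(WFP.A p.1 p.2)) * (-(1/2) * (p.1 i + 3 * p.2 i))
          + Real.exp (-(WFP.A p.1 p.2)) : ℝ) : ℂ) := by
  have hfun : (fun q : E × E => (q.2 i : ℂ) * (Real.exp (-(WFP.A q.1 q.2)) : ℂ))
      = fun q : E × E => ((q.2 i * Real.exp (-(WFP.A q.1 q.2)) : ℝ) : ℂ) := by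
    funext q; push_cast; ring
  rw [hfun]
  have hprod := (hasFDerivAt_y i p).mul (hasFDerivAt_φ p).exp
  have h2 : HasFDerivAt (fun q : E × E => ((q.2 i * Real.exp (-(WFP.A q.1 q.2)) : ℝ) : ℂ))
      (Complex.ofRealCLM.comp
        ((p.2 i) • (Real.exp (-(WFP.A p.1 p.2)) • Dφ p)
          + Real.exp (-(WFP.A p.1 p.2)) • Y i)) p :=
    Complex.ofRealCLM.hasFDerivAt.comp p hprod
  rw [h2.fderiv]
  simp only [ContinuousLinearMap.comp_apply, ContinuousLinearMap.add_apply,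
    ContinuousLinearMap.smul_apply, Y_apply, Dφ_dir_y, smul_eq_mul,
    Complex.ofRealCLM_apply]
  simp [EuclideanSpace.single_apply]
  push_cast
  ring

end WFPaux

/-- `μ = e^{−A}` is a stationary solution: `L μ = 0` pointwise. -/
theorem WFP.L_mu_eq_zero (d : ℕ) (hd : 1 ≤ d)
    (p : EuclideanSpace ℝ (Fin d) × EuclideanSpace ℝ (Fin d)) :
    WFP.L (fun q => (Real.exp (-(WFP.A q.1 q.2)) : ℂ)) p = 0 := by
  unfold WFP.L
  simp only [WFPaux.second_y, WFPaux.second_x, WFPaux.div_term]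
  simp only [WFPaux.fderiv_mu_apply]
  rw [WFPaux.Dφ_apply, WFPaux.Dφ_apply]
  simp only [inner_zero_right, PiLp.inner_apply, RCLike.inner_apply, conj_trivial,
    PiLp.add_apply, PiLp.smul_apply, smul_eq_mul, add_zero, zero_add]
  push_cast
  simp only [Finset.mul_sum, ← Finset.sum_neg_distrib, ← Finset.sum_add_distrib]
  exact Finset.sum_eq_zero fun i _ => by ring
end

section
/- Let d ≥ 1, A(x,ξ) := (1/4)(|x|² + 2 x·ξ + 3|ξ|²) and F(x,ξ) := (1/2)(−x − 3ξ, x + ξ). Then for every C² function w : ℝ^{2d} → ℂ and all (x,ξ) ∈ ℝ^{2d}, the Wigner–Fokker–Planck operator with harmonic potential admits the drift–diffusion decomposition: −ξ·∇_x w + x·∇_ξ w + Δ_ξ w + 2 div_ξ(ξ w) + Δ_x w = div( ∇w + w (∇A + F) ), where ∇ and div on the right-hand side act in all 2d variables (x,ξ). -/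
open MeasureTheory Real

/-- `F(x,ξ) := (1/2)(−x − 3ξ, x + ξ)`. -/
noncomputable def WFP.F {d : ℕ}
    (p : EuclideanSpace ℝ (Fin d) × EuclideanSpace ℝ (Fin d)) :
    EuclideanSpace ℝ (Fin d) × EuclideanSpace ℝ (Fin d) :=
  ((1 / 2 : ℝ) • (-p.1 - (3 : ℝ) • p.2), (1 / 2 : ℝ) • (p.1 + p.2))

section aux

variable {d : ℕ}

local notation "E" => EuclideanSpace ℝ (Fin d)

lemma WFPaux.basis_decomp (x : E) :
    x = ∑ i : Fin d, x i • EuclideanSpace.single i (1 : ℝ) := by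
  have h := (EuclideanSpace.basisFun (Fin d) ℝ).sum_repr' x
  simp only [EuclideanSpace.basisFun_apply, EuclideanSpace.inner_single_left, map_one, one_mul,
    RCLike.star_def, conj_trivial] at h
  exact h.symm

lemma WFPaux.pair_decomp_fst (x : E) :
    ((x, (0 : E)) : E × E) = ∑ i : Fin d, x i • ((EuclideanSpace.single i (1:ℝ) : E), (0 : E)) := by
  refine Prod.ext ?_ ?_
  · rw [Prod.fst_sum]; simpa using WFPaux.basis_decomp x
  · rw [Prod.snd_sum]; simp

lemma WFPaux.pair_decomp_snd (x : E) :
    (((0 : E), x) : E × E) = ∑ i : Fin d, x i • ((0 : E), (EuclideanSpace.single i (1:ℝ) : E)) := by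
  refine Prod.ext ?_ ?_
  · rw [Prod.fst_sum]; simp
  · rw [Prod.snd_sum]; simpa using WFPaux.basis_decomp x

lemma WFPaux.fderiv_A_apply (q v : E × E) :
    fderiv ℝ (fun r : E × E => WFP.A r.1 r.2) q v
      = (1/2) * ((inner ℝ q.1 v.1 : ℝ) + (inner ℝ q.2 v.1 : ℝ) + (inner ℝ q.1 v.2 : ℝ)
          + 3 * (inner ℝ q.2 v.2 : ℝ)) := by
  have hfun : (fun r : E × E => WFP.A r.1 r.2)
      = fun r : E × E => (1/4 : ℝ) * (((inner ℝ r.1 r.1 : ℝ) + 2 * (inner ℝ r.1 r.2 : ℝ))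
          + 3 * (inner ℝ r.2 r.2 : ℝ)) := by
    funext r
    simp only [WFP.A, ← real_inner_self_eq_norm_sq]
  have d1 : DifferentiableAt ℝ (fun r : E × E => (inner ℝ r.1 r.1 : ℝ)) q :=
    differentiableAt_fst.inner ℝ differentiableAt_fst
  have d2 : DifferentiableAt ℝ (fun r : E × E => (inner ℝ r.1 r.2 : ℝ)) q :=
    differentiableAt_fst.inner ℝ differentiableAt_snd
  have d3 : DifferentiableAt ℝ (fun r : E × E => (inner ℝ r.2 r.2 : ℝ)) q :=
    differentiableAt_snd.inner ℝ differentiableAt_snd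
  have h1 : fderiv ℝ (fun r : E × E => (inner ℝ r.1 r.1 : ℝ)) q v = 2 * (inner ℝ q.1 v.1 : ℝ) := by
    rw [fderiv_inner_apply ℝ differentiableAt_fst differentiableAt_fst, fderiv_fst]
    simp only [ContinuousLinearMap.coe_fst', ContinuousLinearMap.coe_snd']
    rw [real_inner_comm v.1 q.1]; ring
  have h2 : fderiv ℝ (fun r : E × E => (inner ℝ r.1 r.2 : ℝ)) q v
      = (inner ℝ q.1 v.2 : ℝ) + (inner ℝ q.2 v.1 : ℝ) := by
    rw [fderiv_inner_apply ℝ differentiableAt_fst differentiableAt_snd, fderiv_fst, fderiv_snd]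
    simp only [ContinuousLinearMap.coe_fst', ContinuousLinearMap.coe_snd']
    rw [real_inner_comm v.1 q.2]
  have h3 : fderiv ℝ (fun r : E × E => (inner ℝ r.2 r.2 : ℝ)) q v = 2 * (inner ℝ q.2 v.2 : ℝ) := by
    rw [fderiv_inner_apply ℝ differentiableAt_snd differentiableAt_snd, fderiv_snd]
    simp only [ContinuousLinearMap.coe_fst', ContinuousLinearMap.coe_snd']
    rw [real_inner_comm v.2 q.2]; ring
  rw [hfun]
  rw [fderiv_const_mul ((d1.fun_add (d2.const_mul 2)).fun_add (d3.const_mul 3))]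
  simp only [ContinuousLinearMap.smul_apply, smul_eq_mul]
  rw [fderiv_fun_add (d1.fun_add (d2.const_mul 2)) (d3.const_mul 3)]
  simp only [ContinuousLinearMap.add_apply]
  rw [fderiv_fun_add d1 (d2.const_mul 2), fderiv_const_mul d2, fderiv_const_mul d3]
  simp only [ContinuousLinearMap.add_apply, ContinuousLinearMap.smul_apply, smul_eq_mul]
  rw [h1, h2, h3]
  ring

/-- x-direction drift coefficient: `∂_{x_i} A + F₁ᵢ = -ξᵢ`. -/
lemma WFPaux.Agrad_x (q : E × E) (i : Fin d) :
    fderiv ℝ (fun r : E × E => WFP.A r.1 r.2) q (EuclideanSpace.single i 1, 0)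
      + (WFP.F q).1 i = -(q.2 i) := by
  rw [WFPaux.fderiv_A_apply]
  have h1 : (inner ℝ q.1 (EuclideanSpace.single i (1:ℝ)) : ℝ) = q.1 i := by
    simp [EuclideanSpace.inner_single_right]
  have h2 : (inner ℝ q.2 (EuclideanSpace.single i (1:ℝ)) : ℝ) = q.2 i := by
    simp [EuclideanSpace.inner_single_right]
  have hF : (WFP.F q).1 i = (1/2 : ℝ) * (-(q.1 i) - 3 * q.2 i) := by
    simp [WFP.F, PiLp.smul_apply, PiLp.sub_apply, PiLp.neg_apply, smul_eq_mul]
  simp only [h1, h2, hF, inner_zero_right]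
  ring

/-- ξ-direction drift coefficient: `∂_{ξ_i} A + F₂ᵢ = xᵢ + 2ξᵢ`. -/
lemma WFPaux.Agrad_xi (q : E × E) (i : Fin d) :
    fderiv ℝ (fun r : E × E => WFP.A r.1 r.2) q (0, EuclideanSpace.single i 1)
      + (WFP.F q).2 i = q.1 i + 2 * q.2 i := by
  rw [WFPaux.fderiv_A_apply]
  have h1 : (inner ℝ q.1 (EuclideanSpace.single i (1:ℝ)) : ℝ) = q.1 i := by
    simp [EuclideanSpace.inner_single_right]
  have h2 : (inner ℝ q.2 (EuclideanSpace.single i (1:ℝ)) : ℝ) = q.2 i := by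
    simp [EuclideanSpace.inner_single_right]
  have hF : (WFP.F q).2 i = (1/2 : ℝ) * (q.1 i + q.2 i) := by
    simp [WFP.F, PiLp.smul_apply, PiLp.add_apply, smul_eq_mul]
    ring
  simp only [h1, h2, hF, inner_zero_right]
  ring

/-- product rule for `w * (c ·)` with a continuous linear `c`, plus the second derivative term. -/
lemma WFPaux.key (w : E × E → ℂ) (hw : ContDiff ℝ 2 w) (p u v : E × E)
    (c : (E × E) →L[ℝ] ℝ) :
    fderiv ℝ (fun q => fderiv ℝ w q u + w q * ((c q : ℝ) : ℂ)) p v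
      = fderiv ℝ (fun q => fderiv ℝ w q u) p v
        + fderiv ℝ w p v * (c p : ℂ) + w p * (c v : ℂ) := by
  have hw1 : Differentiable ℝ w := hw.differentiable (by norm_num)
  have hD : Differentiable ℝ (fun q => fderiv ℝ w q u) :=
    ((hw.fderiv_right (m := 1) (by norm_num)).differentiable one_ne_zero).clm_apply (differentiable_const u)
  have hc : (fun q : E × E => ((c q : ℝ) : ℂ)) = ⇑(Complex.ofRealCLM.comp c) := rfl
  have hcd : Differentiable ℝ (fun q : E × E => ((c q : ℝ) : ℂ)) := by
    rw [hc]; exact (Complex.ofRealCLM.comp c).differentiable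
  rw [fderiv_fun_add hD.differentiableAt (hw1.differentiableAt.fun_mul hcd.differentiableAt)]
  simp only [ContinuousLinearMap.add_apply]
  rw [fderiv_fun_mul hw1.differentiableAt hcd.differentiableAt]
  have hfc : fderiv ℝ (fun q : E × E => ((c q : ℝ) : ℂ)) p = Complex.ofRealCLM.comp c := by
    rw [hc]; exact ContinuousLinearMap.fderiv _
  simp only [ContinuousLinearMap.add_apply, ContinuousLinearMap.smul_apply, smul_eq_mul, hfc,
    ContinuousLinearMap.comp_apply, Complex.ofRealCLM_apply]
  ring

/-- product rule for `(c ·) * w`. -/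
lemma WFPaux.key2 (w : E × E → ℂ) (hw : ContDiff ℝ 2 w) (p v : E × E)
    (c : (E × E) →L[ℝ] ℝ) :
    fderiv ℝ (fun q => ((c q : ℝ) : ℂ) * w q) p v
      = (c p : ℂ) * fderiv ℝ w p v + w p * (c v : ℂ) := by
  have hw1 : Differentiable ℝ w := hw.differentiable (by norm_num)
  have hc : (fun q : E × E => ((c q : ℝ) : ℂ)) = ⇑(Complex.ofRealCLM.comp c) := rfl
  have hcd : Differentiable ℝ (fun q : E × E => ((c q : ℝ) : ℂ)) := by
    rw [hc]; exact (Complex.ofRealCLM.comp c).differentiable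
  rw [fderiv_fun_mul hcd.differentiableAt hw1.differentiableAt]
  have hfc : fderiv ℝ (fun q : E × E => ((c q : ℝ) : ℂ)) p = Complex.ofRealCLM.comp c := by
    rw [hc]; exact ContinuousLinearMap.fderiv _
  simp only [ContinuousLinearMap.add_apply, ContinuousLinearMap.smul_apply, smul_eq_mul, hfc,
    ContinuousLinearMap.comp_apply, Complex.ofRealCLM_apply]

/-- the CLM `q ↦ -(q.2 i)` -/
noncomputable def WFPaux.cx (i : Fin d) : (E × E) →L[ℝ] ℝ :=
  -((EuclideanSpace.proj i).comp (ContinuousLinearMap.snd ℝ E E))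

lemma WFPaux.cx_apply (i : Fin d) (q : E × E) : WFPaux.cx i q = -(q.2 i) := rfl

/-- the CLM `q ↦ q.1 i + 2 * q.2 i` -/
noncomputable def WFPaux.cxi (i : Fin d) : (E × E) →L[ℝ] ℝ :=
  (EuclideanSpace.proj i).comp (ContinuousLinearMap.fst ℝ E E)
    + (2 : ℝ) • ((EuclideanSpace.proj i).comp (ContinuousLinearMap.snd ℝ E E))

lemma WFPaux.cxi_apply (i : Fin d) (q : E × E) : WFPaux.cxi i q = q.1 i + 2 * q.2 i := rfl

/-- the CLM `q ↦ q.2 i` -/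
noncomputable def WFPaux.c2 (i : Fin d) : (E × E) →L[ℝ] ℝ :=
  (EuclideanSpace.proj i).comp (ContinuousLinearMap.snd ℝ E E)

lemma WFPaux.c2_apply (i : Fin d) (q : E × E) : WFPaux.c2 i q = q.2 i := rfl

end aux

/-- drift-diffusion decomposition `L w = div(∇w + w(∇A + F))`,
where `∇` and `div` on the right act in all 2d variables. -/
theorem WFP.drift_diffusion_form (d : ℕ) (hd : 1 ≤ d)
    (w : EuclideanSpace ℝ (Fin d) × EuclideanSpace ℝ (Fin d) → ℂ)
    (hw : ContDiff ℝ 2 w)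
    (p : EuclideanSpace ℝ (Fin d) × EuclideanSpace ℝ (Fin d)) :
    WFP.L w p =
      (∑ i : Fin d, fderiv ℝ (fun q =>
          fderiv ℝ w q (EuclideanSpace.single i 1, 0)
            + w q * (((fderiv ℝ (fun r : EuclideanSpace ℝ (Fin d) × EuclideanSpace ℝ (Fin d) =>
                WFP.A r.1 r.2) q (EuclideanSpace.single i 1, 0)) + (WFP.F q).1 i : ℝ) : ℂ))
          p (EuclideanSpace.single i 1, 0))
      + ∑ i : Fin d, fderiv ℝ (fun q =>
          fderiv ℝ w q (0, EuclideanSpace.single i 1)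
            + w q * (((fderiv ℝ (fun r : EuclideanSpace ℝ (Fin d) × EuclideanSpace ℝ (Fin d) =>
                WFP.A r.1 r.2) q (0, EuclideanSpace.single i 1)) + (WFP.F q).2 i : ℝ) : ℂ))
          p (0, EuclideanSpace.single i 1) := by
  have hRx : ∀ i : Fin d, fderiv ℝ (fun q =>
          fderiv ℝ w q (EuclideanSpace.single i 1, 0)
            + w q * (((fderiv ℝ (fun r : EuclideanSpace ℝ (Fin d) × EuclideanSpace ℝ (Fin d) =>
                WFP.A r.1 r.2) q (EuclideanSpace.single i 1, 0)) + (WFP.F q).1 i : ℝ) : ℂ))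
          p (EuclideanSpace.single i 1, 0)
      = fderiv ℝ (fun q => fderiv ℝ w q (EuclideanSpace.single i 1, 0)) p
          (EuclideanSpace.single i 1, 0)
        + fderiv ℝ w p (EuclideanSpace.single i 1, 0) * ((-(p.2 i) : ℝ) : ℂ) := by
    intro i
    have hfun : (fun q =>
          fderiv ℝ w q (EuclideanSpace.single i 1, 0)
            + w q * (((fderiv ℝ (fun r : EuclideanSpace ℝ (Fin d) × EuclideanSpace ℝ (Fin d) =>
                WFP.A r.1 r.2) q (EuclideanSpace.single i 1, 0)) + (WFP.F q).1 i : ℝ) : ℂ))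
        = fun q => fderiv ℝ w q (EuclideanSpace.single i 1, 0)
            + w q * ((WFPaux.cx i q : ℝ) : ℂ) := by
      funext q
      rw [WFPaux.Agrad_x, WFPaux.cx_apply]
    rw [hfun, WFPaux.key w hw p _ _ (WFPaux.cx i), WFPaux.cx_apply, WFPaux.cx_apply]
    norm_num
  have hRxi : ∀ i : Fin d, fderiv ℝ (fun q =>
          fderiv ℝ w q (0, EuclideanSpace.single i 1)
            + w q * (((fderiv ℝ (fun r : EuclideanSpace ℝ (Fin d) × EuclideanSpace ℝ (Fin d) =>
                WFP.A r.1 r.2) q (0, EuclideanSpace.single i 1)) + (WFP.F q).2 i : ℝ) : ℂ))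
          p (0, EuclideanSpace.single i 1)
      = fderiv ℝ (fun q => fderiv ℝ w q (0, EuclideanSpace.single i 1)) p
          (0, EuclideanSpace.single i 1)
        + fderiv ℝ w p (0, EuclideanSpace.single i 1) * ((p.1 i + 2 * p.2 i : ℝ) : ℂ)
        + 2 * w p := by
    intro i
    have hfun : (fun q =>
          fderiv ℝ w q (0, EuclideanSpace.single i 1)
            + w q * (((fderiv ℝ (fun r : EuclideanSpace ℝ (Fin d) × EuclideanSpace ℝ (Fin d) =>
                WFP.A r.1 r.2) q (0, EuclideanSpace.single i 1)) + (WFP.F q).2 i : ℝ) : ℂ))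
        = fun q => fderiv ℝ w q (0, EuclideanSpace.single i 1)
            + w q * ((WFPaux.cxi i q : ℝ) : ℂ) := by
      funext q
      rw [WFPaux.Agrad_xi, WFPaux.cxi_apply]
    rw [hfun, WFPaux.key w hw p _ _ (WFPaux.cxi i), WFPaux.cxi_apply, WFPaux.cxi_apply]
    simp [EuclideanSpace.single_apply]
    ring
  have hdiv : ∀ i : Fin d, fderiv ℝ (fun q => ((q.2 i : ℝ) : ℂ) * w q) p
        (0, EuclideanSpace.single i 1)
      = ((p.2 i : ℝ) : ℂ) * fderiv ℝ w p (0, EuclideanSpace.single i 1) + w p := by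
    intro i
    have := WFPaux.key2 w hw p ((0 : EuclideanSpace ℝ (Fin d)), EuclideanSpace.single i 1)
      (WFPaux.c2 i)
    simp only [WFPaux.c2_apply] at this
    rw [this]
    simp [EuclideanSpace.single_apply]
  have hfx : fderiv ℝ w p ((p.2 : EuclideanSpace ℝ (Fin d)), (0 : EuclideanSpace ℝ (Fin d)))
      = ∑ i : Fin d, (p.2 i) • fderiv ℝ w p (EuclideanSpace.single i 1, 0) := by
    rw [WFPaux.pair_decomp_fst p.2, map_sum]
    simp only [_root_.map_smul]
  have hfxi : fderiv ℝ w p ((0 : EuclideanSpace ℝ (Fin d)), (p.1 : EuclideanSpace ℝ (Fin d)))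
      = ∑ i : Fin d, (p.1 i) • fderiv ℝ w p (0, EuclideanSpace.single i 1) := by
    rw [WFPaux.pair_decomp_snd p.1, map_sum]
    simp only [_root_.map_smul]
  rw [WFP.L, hfx, hfxi]
  simp only [hRx, hRxi, hdiv]
  simp only [Finset.mul_sum, ← Finset.sum_neg_distrib, ← Finset.sum_add_distrib]
  refine Finset.sum_congr rfl fun i _ => ?_
  push_cast
  simp only [Complex.real_smul]
  push_cast
  ring
end

section
/- Let d ≥ 1 and A(x,ξ) := (1/4)(|x|² + 2 x·ξ + 3|ξ|²), with ∇A the gradient in all 2d variables. Then with K := 144, for every integer m ≥ K·d and every (x,ξ) ∈ ℝ^{2d} with |x|² + |ξ|² ≥ 12: 4d (1 + A(x,ξ)^m) ≤ m A(x,ξ)^{m−1} |∇A(x,ξ)|². -/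
open MeasureTheory Real

/-- `|∇A|²`, the squared length of the full gradient `∇A(x,ξ) = (1/2)(x+ξ, x+3ξ)`. -/
noncomputable def WFP.gradAsq {d : ℕ} (x ξ : EuclideanSpace ℝ (Fin d)) : ℝ :=
  (1 / 4) * (‖x + ξ‖ ^ 2 + ‖x + (3 : ℝ) • ξ‖ ^ 2)

/-- with `K = 144`, for `m ≥ K·d` and `|x|²+|ξ|² ≥ 12`:
`4d(1 + A^m) ≤ m A^{m−1} |∇A|²`. -/
theorem WFP.lemma_b (d : ℕ) (hd : 1 ≤ d) (m : ℕ) (hm : 144 * d ≤ m)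
    (x ξ : EuclideanSpace ℝ (Fin d)) (hxξ : 12 ≤ ‖x‖ ^ 2 + ‖ξ‖ ^ 2) :
    (4 * d : ℝ) * (1 + WFP.A x ξ ^ m) ≤ (m : ℝ) * WFP.A x ξ ^ (m - 1) * WFP.gradAsq x ξ := by
  have hp := abs_real_inner_le_norm x ξ
  have hp1 : -(‖x‖ * ‖ξ‖) ≤ (inner ℝ x ξ : ℝ) := neg_le_of_abs_le hp
  have hp2 : (inner ℝ x ξ : ℝ) ≤ ‖x‖ * ‖ξ‖ := le_of_abs_le hp
  have hG : WFP.gradAsq x ξ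
      = (1/4)*((‖x‖^2 + 2*(inner ℝ x ξ : ℝ) + ‖ξ‖^2)
        + (‖x‖^2 + 6*(inner ℝ x ξ : ℝ) + 9*‖ξ‖^2)) := by
    rw [WFP.gradAsq, norm_add_sq_real, norm_add_sq_real, real_inner_smul_right, norm_smul]
    have : ‖(3:ℝ)‖ = 3 := by norm_num
    rw [this]; ring
  have hA : WFP.A x ξ = (1/4)*(‖x‖^2 + 2*(inner ℝ x ξ : ℝ) + 3*‖ξ‖^2) := rfl
  have ha : 0 ≤ ‖x‖ := norm_nonneg _
  have hb : 0 ≤ ‖ξ‖ := norm_nonneg _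
  have hA1 : (1:ℝ) ≤ WFP.A x ξ := by
    rw [hA]; nlinarith [sq_nonneg (‖x‖ - 2*‖ξ‖)]
  have hG0 : (0:ℝ) ≤ WFP.gradAsq x ξ := by
    rw [hG]; nlinarith [sq_nonneg (5*‖x‖ - 12*‖ξ‖)]
  have hAG : WFP.A x ξ ≤ 12 * WFP.gradAsq x ξ := by
    rw [hA, hG]; nlinarith [sq_nonneg (23*‖x‖ - 47*‖ξ‖)]
  set A := WFP.A x ξ
  set G := WFP.gradAsq x ξ
  have hm1 : 1 ≤ m := le_trans (by omega) hm
  have hmm : m = (m - 1) + 1 := by omega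
  have hA0 : (0:ℝ) ≤ A := by linarith
  have hApow : (0:ℝ) ≤ A ^ (m - 1) := pow_nonneg hA0 _
  have h1 : (1:ℝ) ≤ A ^ m := one_le_pow₀ hA1
  have hd1 : (1:ℝ) ≤ (d:ℝ) := by exact_mod_cast hd
  have hmr : (144:ℝ) * d ≤ (m:ℝ) := by exact_mod_cast hm
  calc (4 * d : ℝ) * (1 + A ^ m) ≤ (4 * d : ℝ) * (2 * A ^ m) := by
        have : (0:ℝ) ≤ (d:ℝ) := by linarith
        nlinarith
    _ = (8 * d : ℝ) * (A ^ (m-1) * A) := by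
        have hpw : A ^ m = A ^ (m-1) * A := by rw [← pow_succ, ← hmm]
        rw [hpw]; ring
    _ ≤ (8 * d : ℝ) * (A ^ (m-1) * (12 * G)) := by
        have h8d : (0:ℝ) ≤ 8 * d := by positivity
        exact mul_le_mul_of_nonneg_left (mul_le_mul_of_nonneg_left hAG hApow) h8d
    _ = (144 * d : ℝ) * (2/3) * A ^ (m-1) * G := by ring
    _ ≤ (m : ℝ) * A ^ (m - 1) * G := by
        have : (144 * d : ℝ) * (2/3) ≤ (m:ℝ) := by linarith
        have hAG0 : 0 ≤ A ^ (m-1) * G := mul_nonneg hApow hG0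
        calc (144 * d : ℝ) * (2/3) * A ^ (m-1) * G
            = ((144 * d : ℝ) * (2/3)) * (A ^ (m-1) * G) := by ring
          _ ≤ (m:ℝ) * (A ^ (m-1) * G) := mul_le_mul_of_nonneg_right this hAG0
          _ = (m : ℝ) * A ^ (m - 1) * G := by ring
end

section
/- Let d ≥ 1 and A(x,ξ) := (1/4)(|x|² + 2 x·ξ + 3|ξ|²), with ∇ and Δ taken in all 2d variables (x,ξ). Then for every ε > 0, every integer m ≥ 1, and every (x,ξ) ∈ ℝ^{2d} with |x| ≥ 1/ε and |ξ| ≥ 1/ε: Δ(1 + A^m)(x,ξ) ≤ 6 ε² m (m − 1 + 3d) · A(x,ξ)^{m−1} |∇A(x,ξ)|². -/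
open MeasureTheory Real

/-- The Laplacian in all 2d variables `(x,ξ)` of a real-valued function on `ℝ^{2d}`. -/
noncomputable def WFP.laplacian {d : ℕ}
    (f : EuclideanSpace ℝ (Fin d) × EuclideanSpace ℝ (Fin d) → ℝ)
    (p : EuclideanSpace ℝ (Fin d) × EuclideanSpace ℝ (Fin d)) : ℝ :=
  (∑ i : Fin d, fderiv ℝ (fun q => fderiv ℝ f q (EuclideanSpace.single i 1, 0)) p
      (EuclideanSpace.single i 1, 0))
  + ∑ i : Fin d, fderiv ℝ (fun q => fderiv ℝ f q (0, EuclideanSpace.single i 1)) p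
      (0, EuclideanSpace.single i 1)

namespace WFP

variable {d : ℕ}

local notation "E" => EuclideanSpace ℝ (Fin d)

/-- The derivative of `B q = A q.1 q.2` as a continuous linear map, in the exact
shape produced by the chain rule combinators. -/
noncomputable def Db (q : E × E) : (E × E) →L[ℝ] ℝ :=
  ((1:ℝ)/4) • ((2 • (innerSL ℝ q.1).comp (ContinuousLinearMap.fst ℝ E E)) +
    (((2:ℝ) • ((fderivInnerCLM ℝ (q.1, q.2)).comp
        ((ContinuousLinearMap.fst ℝ E E).prod (ContinuousLinearMap.snd ℝ E E)))) +
     ((3:ℝ) • (2 • (innerSL ℝ q.2).comp (ContinuousLinearMap.snd ℝ E E)))))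

lemma hasFDerivAt_B (q : E × E) :
    HasFDerivAt (fun q : E × E => WFP.A q.1 q.2) (Db q) q := by
  have h1 : HasFDerivAt (fun q : E × E => ‖q.1‖ ^ 2)
      (2 • (innerSL ℝ q.1).comp (ContinuousLinearMap.fst ℝ E E)) q :=
    (hasFDerivAt_fst).norm_sq
  have h2 : HasFDerivAt (fun q : E × E => (inner ℝ q.1 q.2 : ℝ))
      ((fderivInnerCLM ℝ (q.1, q.2)).comp
        ((ContinuousLinearMap.fst ℝ E E).prod (ContinuousLinearMap.snd ℝ E E))) q :=
    (hasFDerivAt_fst).inner ℝ (hasFDerivAt_snd)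
  have h3 : HasFDerivAt (fun q : E × E => ‖q.2‖ ^ 2)
      (2 • (innerSL ℝ q.2).comp (ContinuousLinearMap.snd ℝ E E)) q :=
    (hasFDerivAt_snd).norm_sq
  have h := ((h1.add ((h2.const_mul (2:ℝ)).add (h3.const_mul (3:ℝ)))).const_mul ((1:ℝ)/4))
  have he : (fun q : E × E => WFP.A q.1 q.2)
      = fun q : E × E => (1/4 : ℝ) * (‖q.1‖ ^ 2 + (2 * (inner ℝ q.1 q.2 : ℝ) + 3 * ‖q.2‖ ^ 2)) := by
    funext q; simp [WFP.A]; ring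
  rw [he]
  exact h

lemma Db_apply (q v : E × E) :
    Db q v = (1/2) * ((inner ℝ (q.1 + q.2) v.1 : ℝ) + (inner ℝ (q.1 + (3:ℝ) • q.2) v.2 : ℝ)) := by
  simp [Db, fderivInnerCLM_apply, inner_add_left, inner_smul_left, real_inner_comm, mul_comm]
  ring

lemma hasFDerivAt_pow (m : ℕ) (q : E × E) :
    HasFDerivAt (fun q : E × E => WFP.A q.1 q.2 ^ m)
      ((m * WFP.A q.1 q.2 ^ (m - 1)) • Db q) q :=
  (hasDerivAt_pow m (WFP.A q.1 q.2)).comp_hasFDerivAt q (hasFDerivAt_B q)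

lemma fderiv_f (m : ℕ) (q v : E × E) :
    fderiv ℝ (fun q : E × E => 1 + WFP.A q.1 q.2 ^ m) q v
      = (m * WFP.A q.1 q.2 ^ (m - 1)) * Db q v := by
  rw [((hasFDerivAt_pow m q).const_add 1).fderiv]
  simp

/-- The "linear part" `q ↦ Db q v` has derivative `w ↦ Dl v w` where
`Dl v w = (1/2)(⟪w.1+w.2, v.1⟫ + ⟪w.1+3w.2, v.2⟫)`; we only need its value at `v`. -/
lemma second_deriv (m : ℕ) (p v : E × E) :
    fderiv ℝ (fun q : E × E =>
        fderiv ℝ (fun q : E × E => 1 + WFP.A q.1 q.2 ^ m) q (v)) p v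
      = (m : ℝ) * ((m - 1 : ℕ) * WFP.A p.1 p.2 ^ (m - 1 - 1)) * Db p v * Db p v
        + (m : ℝ) * WFP.A p.1 p.2 ^ (m - 1) *
          ((1/2) * ((inner ℝ (v.1 + v.2) v.1 : ℝ) + (inner ℝ (v.1 + (3:ℝ) • v.2) v.2 : ℝ))) := by
  have he : (fun q : E × E => fderiv ℝ (fun q : E × E => 1 + WFP.A q.1 q.2 ^ m) q v)
      = fun q : E × E => ((m : ℝ) * (WFP.A q.1 q.2 ^ (m - 1)))
          * ((1/2) * ((inner ℝ (q.1 + q.2) v.1 : ℝ) + (inner ℝ (q.1 + (3:ℝ) • q.2) v.2 : ℝ))) := by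
    funext q
    rw [fderiv_f, Db_apply]
  rw [he]
  have hc : HasFDerivAt (fun q : E × E => (m : ℝ) * (WFP.A q.1 q.2 ^ (m - 1)))
      ((m : ℝ) • ((((m - 1 : ℕ) : ℝ) * WFP.A p.1 p.2 ^ (m - 1 - 1)) • Db p)) p :=
    (hasFDerivAt_pow (m - 1) p).const_mul (m : ℝ)
  have ha : HasFDerivAt (fun q : E × E => q.1 + q.2)
      (ContinuousLinearMap.fst ℝ E E + ContinuousLinearMap.snd ℝ E E) p :=
    hasFDerivAt_fst.add hasFDerivAt_snd
  have hb : HasFDerivAt (fun q : E × E => q.1 + (3:ℝ) • q.2)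
      (ContinuousLinearMap.fst ℝ E E + (3:ℝ) • ContinuousLinearMap.snd ℝ E E) p :=
    hasFDerivAt_fst.add (hasFDerivAt_snd.const_smul (3:ℝ))
  have hi1 := ha.inner ℝ (hasFDerivAt_const v.1 p)
  have hi2 := hb.inner ℝ (hasFDerivAt_const v.2 p)
  have hl := (hi1.add hi2).const_mul ((1:ℝ)/2)
  have hG := hc.mul hl
  erw [hG.fderiv]
  simp [Db_apply, fderivInnerCLM_apply]
  ring

lemma sum_inner_single_sq (y : E) :
    ∑ i : Fin d, (inner ℝ y (EuclideanSpace.single i (1:ℝ)) : ℝ) ^ 2 = ‖y‖ ^ 2 := by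
  have h : ∀ i, (inner ℝ y (EuclideanSpace.single i (1:ℝ)) : ℝ) = y i := fun i => by
    rw [EuclideanSpace.inner_single_right]; simp
  simp_rw [h]
  rw [EuclideanSpace.norm_eq, Real.sq_sqrt (by positivity)]
  simp [Real.norm_eq_abs, sq_abs]

lemma laplacian_eq (m : ℕ) (x ξ : E) :
    WFP.laplacian (fun q => 1 + WFP.A q.1 q.2 ^ m) (x, ξ)
      = (m : ℝ) * ((m - 1 : ℕ) : ℝ) * WFP.A x ξ ^ (m - 1 - 1) * WFP.gradAsq x ξ
        + 2 * d * (m : ℝ) * WFP.A x ξ ^ (m - 1) := by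
  unfold WFP.laplacian
  simp_rw [second_deriv m (x, ξ)]
  simp [Db_apply, real_inner_self_eq_norm_sq, inner_smul_left, EuclideanSpace.inner_single_right]
  have hn : ∀ y : E, ∑ i : Fin d, (y i) ^ 2 = ‖y‖ ^ 2 := fun y => by
    rw [EuclideanSpace.norm_eq, Real.sq_sqrt (by positivity)]
    simp [Real.norm_eq_abs, sq_abs]
  have k1 : ∑ i : Fin d, ((m : ℝ) * (((m - 1 : ℕ) : ℝ) * WFP.A x ξ ^ (m - 1 - 1)) *
        (2⁻¹ * (x i + ξ i)) * (2⁻¹ * (x i + ξ i)))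
      = (m : ℝ) * (((m - 1 : ℕ) : ℝ) * WFP.A x ξ ^ (m - 1 - 1)) * 4⁻¹ * ‖x + ξ‖ ^ 2 := by
    have h := hn (x + ξ)
    simp only [PiLp.add_apply] at h
    rw [← h, Finset.mul_sum]
    exact Finset.sum_congr rfl fun i _ => by ring
  have k2 : ∑ i : Fin d, ((m : ℝ) * (((m - 1 : ℕ) : ℝ) * WFP.A x ξ ^ (m - 1 - 1)) *
        (2⁻¹ * (x i + 3 * ξ i)) * (2⁻¹ * (x i + 3 * ξ i)))
      = (m : ℝ) * (((m - 1 : ℕ) : ℝ) * WFP.A x ξ ^ (m - 1 - 1)) * 4⁻¹ * ‖x + (3:ℝ) • ξ‖ ^ 2 := by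
    have h := hn (x + (3:ℝ) • ξ)
    simp only [PiLp.add_apply, PiLp.smul_apply, smul_eq_mul] at h
    rw [← h, Finset.mul_sum]
    exact Finset.sum_congr rfl fun i _ => by ring
  rw [Finset.sum_add_distrib, Finset.sum_add_distrib, k1, k2, Finset.sum_const, Finset.sum_const]
  simp only [Finset.card_univ, Fintype.card_fin, nsmul_eq_mul, WFP.gradAsq]
  ring

end WFP

/-- for every `ε > 0`, `m ≥ 1`, and `|x| ≥ 1/ε`, `|ξ| ≥ 1/ε`:
`Δ(1 + A^m) ≤ 6 ε² m (m − 1 + 3d) A^{m−1} |∇A|²`. -/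
theorem WFP.lemma_d (d : ℕ) (hd : 1 ≤ d) (ε : ℝ) (hε : 0 < ε) (m : ℕ) (hm : 1 ≤ m)
    (x ξ : EuclideanSpace ℝ (Fin d)) (hx : 1 / ε ≤ ‖x‖) (hξ : 1 / ε ≤ ‖ξ‖) :
    WFP.laplacian (fun q => 1 + WFP.A q.1 q.2 ^ m) (x, ξ) ≤
      6 * ε ^ 2 * (m : ℝ) * ((m : ℝ) - 1 + 3 * d) *
        WFP.A x ξ ^ (m - 1) * WFP.gradAsq x ξ := by
  rw [WFP.laplacian_eq]
  have h3 : 1 ≤ ‖ξ‖ * ε := by rw [div_le_iff₀ hε] at hξ; exact hξ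
  have h4 : 1 ≤ ‖x‖ * ε := by rw [div_le_iff₀ hε] at hx; exact hx
  have hxi := abs_real_inner_le_norm x ξ
  have hu : 1 ≤ 2 * ε ^ 2 * WFP.A x ξ := by
    rw [WFP.A]
    have h5 : -(‖x‖ * ‖ξ‖) ≤ (inner ℝ x ξ : ℝ) := neg_le_of_abs_le hxi
    nlinarith [sq_nonneg (‖x‖ - ‖ξ‖), sq_nonneg (‖ξ‖ * ε), norm_nonneg ξ, hε.le]
  have hv : 1 ≤ 2 * ε ^ 2 * WFP.gradAsq x ξ := by
    have hb : ‖(2:ℝ) • ξ‖ ≤ ‖x + (3:ℝ) • ξ‖ + ‖x + ξ‖ := by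
      have he : (2:ℝ) • ξ = (x + (3:ℝ) • ξ) - (x + ξ) := by module
      rw [he]; exact norm_sub_le _ _
    have h2 : ‖(2:ℝ) • ξ‖ = 2 * ‖ξ‖ := by rw [norm_smul]; simp
    rw [h2] at hb
    rw [WFP.gradAsq]
    have hb2 : 4 * ‖ξ‖ ^ 2 ≤ (‖x + (3:ℝ) • ξ‖ + ‖x + ξ‖) ^ 2 := by
      nlinarith [norm_nonneg (x + ξ), norm_nonneg (x + (3:ℝ) • ξ), norm_nonneg ξ]
    nlinarith [hb2, sq_nonneg (‖x + (3:ℝ) • ξ‖ - ‖x + ξ‖), sq_nonneg (‖ξ‖ * ε - 1), h3, hε.le]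
  have hε2 : (0:ℝ) < 2 * ε ^ 2 := by positivity
  have hA0 : 0 < WFP.A x ξ := by nlinarith
  have hG0 : 0 < WFP.gradAsq x ξ := by nlinarith
  set A := WFP.A x ξ
  set G := WFP.gradAsq x ξ
  obtain ⟨k, rfl⟩ : ∃ k, m = k + 1 := ⟨m - 1, (Nat.succ_pred_eq_of_pos hm).symm⟩
  have hd' : (1:ℝ) ≤ (d:ℝ) := by exact_mod_cast hd
  rcases k with _ | j
  · simp only [Nat.add_sub_cancel, Nat.cast_zero, Nat.zero_add, Nat.sub_self, pow_zero,
      Nat.cast_one]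
    push_cast
    nlinarith [hv, hd', hε2]
  · simp only [Nat.add_sub_cancel]
    have hAj : (0:ℝ) < A ^ j := pow_pos hA0 j
    have key : ((j:ℝ) + 1) * G + 2 * d * A ≤ 6 * ε ^ 2 * (((j:ℝ) + 1) + 3 * d) * A * G := by
      nlinarith [mul_nonneg (sub_nonneg.mpr hu) (mul_nonneg (by positivity : (0:ℝ) ≤ (j:ℝ)+1) hG0.le),
        mul_nonneg (sub_nonneg.mpr hv) (mul_nonneg (by positivity : (0:ℝ) ≤ 2*(d:ℝ)) hA0.le),
        mul_nonneg (mul_nonneg (by positivity : (0:ℝ) ≤ 4*ε^2*((j:ℝ)+1)) hA0.le) hG0.le,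
        mul_nonneg (mul_nonneg (by positivity : (0:ℝ) ≤ 14*ε^2*(d:ℝ)) hA0.le) hG0.le]
    have hfac : (0:ℝ) ≤ ((j:ℝ) + 2) * A ^ j := by positivity
    have := mul_le_mul_of_nonneg_left key hfac
    push_cast
    calc ((j:ℝ) + 1 + 1) * ((j:ℝ) + 1) * A ^ j * G + 2 * d * ((j:ℝ) + 1 + 1) * A ^ (j + 1)
        = (((j:ℝ) + 2) * A ^ j) * (((j:ℝ) + 1) * G + 2 * d * A) := by rw [pow_succ]; ring
      _ ≤ (((j:ℝ) + 2) * A ^ j) * (6 * ε ^ 2 * (((j:ℝ) + 1) + 3 * d) * A * G) := this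
      _ = 6 * ε ^ 2 * ((j:ℝ) + 1 + 1) * ((j:ℝ) + 1 + 1 - 1 + 3 * d) * A ^ (j + 1) * G := by
          rw [pow_succ]; ring
end
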